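/- Let U ⊆ ℝ^n be a nonempty open connected set and let M : U → Mat_{N×n'}(ℝ) be a matrix-valued map each of whose entries is real-analytic on U. Let m be the maximal value of rank M(x) over x ∈ U. Then the set U' = {x ∈ U : rank M(x) = m} is open and dense in U. -/

import Mathlib

open Matrix Submodule Set

private lemma analyticAt_det {n k : ℕ} {A : (Fin n → ℝ) → Matrix (Fin k) (Fin k) ℝ}
    {x : Fin n → ℝ} (h : ∀ i j, AnalyticAt ℝ (fun y => A y i j) x) :
    AnalyticAt ℝ (fun y => (A y).det) x := by
  simp only [Matrix.det_apply']
  exact Finset.analyticAt_fun_sum _ fun σ _ =>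
    analyticAt_const.mul (Finset.analyticAt_fun_prod _ fun i _ => h (σ i) i)

private lemma rank_ge_iff {N n' m : ℕ} (A : Matrix (Fin N) (Fin n') ℝ) :
    m ≤ A.rank ↔ ∃ c : Fin m → Fin n',
      ((A.submatrix id c)ᵀ * (A.submatrix id c)).det ≠ 0 := by
  constructor
  · intro hm
    obtain ⟨t, hts, hspan, hli⟩ := exists_linearIndependent ℝ (Set.range Aᵀ)
    haveI : Fintype t := hli.setFinite.fintype
    have hcard : m ≤ Fintype.card t := by
      have h1 : A.rank = Module.finrank ℝ (span ℝ (Set.range Aᵀ)) :=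
        A.rank_eq_finrank_span_cols
      have h2 : Module.finrank ℝ (span ℝ t) = t.toFinset.card :=
        finrank_span_set_eq_card hli
      rw [h1, ← hspan, h2, Set.toFinset_card] at hm
      exact hm
    obtain ⟨e⟩ : Nonempty (Fin m ↪ t) :=
      Function.Embedding.nonempty_of_card_le (by simpa using hcard)
    choose c hc using fun i : Fin m => hts (e i).2
    refine ⟨c, ?_⟩
    set B := A.submatrix id c with hB
    have hcols : LinearIndependent ℝ (fun j => Bᵀ j) := by
      have heq : (fun j : Fin m => Bᵀ j) = (Subtype.val : t → _) ∘ e := by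
        funext j; ext i
        have := congrFun (hc j) i
        simpa [hB] using this
      rw [heq]
      exact hli.comp e e.injective
    have hinj : Function.Injective B.mulVec := Matrix.mulVec_injective_iff.2 hcols
    have hker : LinearMap.ker (Bᵀ * B).mulVecLin = ⊥ := by
      rw [Matrix.ker_mulVecLin_transpose_mul_self]
      exact LinearMap.ker_eq_bot.2 (by rwa [Matrix.coe_mulVecLin])
    have hunit : IsUnit (Bᵀ * B) := by
      apply Matrix.mulVec_injective_iff_isUnit.1
      rw [← Matrix.coe_mulVecLin]
      exact LinearMap.ker_eq_bot.1 hker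
    exact ((Matrix.isUnit_iff_isUnit_det _).1 hunit).ne_zero
  · rintro ⟨c, hdet⟩
    set B := A.submatrix id c with hB
    have h1 : (Bᵀ * B).rank = Fintype.card (Fin m) :=
      Matrix.rank_of_isUnit _ ((Matrix.isUnit_iff_isUnit_det _).2 (isUnit_iff_ne_zero.2 hdet))
    have h2 : (Bᵀ * B).rank = B.rank := Matrix.rank_transpose_mul_self B
    have h3 : B = A * Matrix.of (fun k j => if k = c j then (1:ℝ) else 0) := by
      ext i j
      simp [hB, Matrix.mul_apply, mul_ite]
    have h4 : B.rank ≤ A.rank := h3 ▸ Matrix.rank_mul_le_left _ _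
    simp only [Fintype.card_fin] at h1
    omega

theorem maximal_rank_set_open_dense
    (n N n' : ℕ) (U : Set (Fin n → ℝ))
    (hUopen : IsOpen U) (hUconn : IsConnected U)
    (M : (Fin n → ℝ) → Matrix (Fin N) (Fin n') ℝ)
    (hM : ∀ (i : Fin N) (j : Fin n'), ∀ x ∈ U, AnalyticAt ℝ (fun y => M y i j) x)
    (m : ℕ)
    (hle : ∀ x ∈ U, (M x).rank ≤ m)
    (hattained : ∃ x ∈ U, (M x).rank = m) :
    IsOpen {x | x ∈ U ∧ (M x).rank = m} ∧
      U ⊆ closure {x | x ∈ U ∧ (M x).rank = m} := by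
  set d : (Fin n → ℝ) → (Fin m → Fin n') → ℝ := fun x c =>
    (((M x).submatrix id c)ᵀ * ((M x).submatrix id c)).det with hd_def
  set F : (Fin n → ℝ) → ℝ := fun x => ∑ c : Fin m → Fin n', (d x c) ^ 2 with hF_def
  have hFne : ∀ x, (F x ≠ 0 ↔ ∃ c, d x c ≠ 0) := by
    intro x
    rw [not_iff_comm, not_exists]
    push_neg
    constructor
    · intro h
      simp only [hF_def]
      exact Finset.sum_eq_zero fun c _ => by rw [h c]; ring
    · intro h c
      have := (Finset.sum_eq_zero_iff_of_nonneg
        (fun c _ => sq_nonneg (d x c))).1 h c (Finset.mem_univ c)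
      exact pow_eq_zero_iff (n := 2) (by norm_num) |>.1 this
  have hrank : ∀ x ∈ U, ((M x).rank = m ↔ F x ≠ 0) := by
    intro x hx
    rw [hFne x]
    constructor
    · intro h
      exact (rank_ge_iff (M x)).1 h.ge
    · intro h
      exact le_antisymm (hle x hx) ((rank_ge_iff (M x)).2 h)
  have hF : ∀ x ∈ U, AnalyticAt ℝ F x := by
    intro x hx
    apply Finset.analyticAt_fun_sum
    intro c _
    have hdc : AnalyticAt ℝ (fun y => d y c) x := by
      apply analyticAt_det
      intro i j
      have heq : (fun y => ((((M y).submatrix id c)ᵀ * ((M y).submatrix id c))) i j)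
          = fun y => ∑ k, M y k (c i) * M y k (c j) := by
        funext y; simp [Matrix.mul_apply]
      rw [heq]
      exact Finset.analyticAt_fun_sum _ fun k _ => (hM k (c i) x hx).mul (hM k (c j) x hx)
    exact hdc.pow 2
  have hSeq : {x | x ∈ U ∧ (M x).rank = m} = {x | x ∈ U ∧ F x ≠ 0} := by
    ext x
    exact and_congr_right fun hx => hrank x hx
  constructor
  · rw [hSeq]
    rw [isOpen_iff_mem_nhds]
    rintro x ⟨hx, hFx⟩
    have h1 : ∀ᶠ y in nhds x, F y ≠ 0 :=
      (hF x hx).continuousAt.eventually_ne hFx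
    have h2 : ∀ᶠ y in nhds x, y ∈ U := hUopen.mem_nhds hx
    filter_upwards [h1, h2] with y hy1 hy2
    exact ⟨hy2, hy1⟩
  · intro x hx
    by_contra hcl
    rw [mem_closure_iff_nhds] at hcl
    push_neg at hcl
    obtain ⟨V, hV, hVS⟩ := hcl
    have hzero : F =ᶠ[nhds x] 0 := by
      have : V ∩ U ∈ nhds x := Filter.inter_mem hV (hUopen.mem_nhds hx)
      filter_upwards [this] with y ⟨hyV, hyU⟩
      by_contra hFy
      have hmem : y ∈ V ∩ {x | x ∈ U ∧ (M x).rank = m} :=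
        ⟨hyV, hyU, (hrank y hyU).2 hFy⟩
      rw [hVS] at hmem
      exact hmem
    have hEq : Set.EqOn F 0 U :=
      AnalyticOnNhd.eqOn_zero_of_preconnected_of_eventuallyEq_zero
        (fun y hy => hF y hy) hUconn.isPreconnected hx hzero
    obtain ⟨x0, hx0U, hx0⟩ := hattained
    exact ((hrank x0 hx0U).1 hx0) (hEq hx0U)
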